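/- arXiv:2102.05213 — 2 statements merged into one kernel-verified Lean document; each statement's English description precedes it below -/
import Mathlib

section
/- Let ρ₀ be a smooth function on the torus T², odd in x₂, and let (ρ,u,p) be a global smooth solution of the IPM system on T² with ρ(·,0) = ρ₀ such that ρ(·,t) is odd in x₂ for every t ≥ 0. Define E(t) = ∫_{[−π,π]²} x₂ ρ(x,t) dx. Then for every t ≥ 0, E'(t) = −∫_{[−π,π]²} |u(x,t)|² dx; in particular E is nonincreasing, and ∫₀^∞ ∫_{[−π,π]²} |u(x,t)|² dx dt ≤ E(0) + 2π³ sup|ρ₀|. -/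
open Real MeasureTheory Filter Topology
open scoped ENNReal NNReal

noncomputable section

/-- Points of the plane `ℝ²`; functions on the torus `T² = [-π,π)²` are identified with
`2π`-periodic (in both variables) functions on `ℝ²`. -/
abbrev Pt : Type := ℝ × ℝ

/-- `2π`-periodicity in both variables. -/
def Per2 (f : Pt → ℝ) : Prop :=
  ∀ x : Pt, f (x.1 + 2 * π, x.2) = f x ∧ f (x.1, x.2 + 2 * π) = f x

/-- Partial derivative in the first space variable. -/
def pd1 (f : Pt → ℝ) (x : Pt) : ℝ := deriv (fun y => f (y, x.2)) x.1

/-- Partial derivative in the second space variable. -/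
def pd2 (f : Pt → ℝ) (x : Pt) : ℝ := deriv (fun y => f (x.1, y)) x.2

/-- The fundamental domain `[-π,π]²` of the torus. -/
def Q2 : Set Pt := Set.Icc (-π) π ×ˢ Set.Icc (-π) π

/-- Fourier coefficient on the torus: `f̂(k) = (2π)⁻² ∫_{[-π,π]²} e^{-ik·x} f(x) dx`. -/
def tcoef (f : Pt → ℝ) (k : ℤ × ℤ) : ℂ :=
  (((2 * π) ^ 2 : ℝ))⁻¹ *
    ∫ x in Q2, Complex.exp (-Complex.I * (((k.1 : ℝ) * x.1 + (k.2 : ℝ) * x.2 : ℝ) : ℂ)) * (f x : ℂ)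

/-- Homogeneous Sobolev norm on the torus (valued in `ℝ≥0∞`):
`‖f‖_{Ḣ^s(T²)}² = (2π)² Σ_{k ≠ 0} |k|^{2s} |f̂(k)|²`; note `|k|^{2s} = (k₁² + k₂²)^s`. -/
def sobT2 (s : ℝ) (f : Pt → ℝ) : ℝ≥0∞ :=
  (ENNReal.ofReal ((2 * π) ^ 2) *
    ∑' k : ℤ × ℤ, (if k = 0 then 0 else
      ENNReal.ofReal ((((k.1 : ℝ) ^ 2 + (k.2 : ℝ) ^ 2)) ^ s) * (‖tcoef f k‖₊ : ℝ≥0∞) ^ 2))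
    ^ (1/2 : ℝ)

/-- Inhomogeneous Sobolev norm on the torus (valued in `ℝ≥0∞`):
`‖f‖_{H^k(T²)}² = (2π)² Σ_{k'} (1 + |k'|²)^k |f̂(k')|²`. -/
def hsobT2 (k : ℝ) (f : Pt → ℝ) : ℝ≥0∞ :=
  (ENNReal.ofReal ((2 * π) ^ 2) *
    ∑' m : ℤ × ℤ,
      ENNReal.ofReal ((1 + (m.1 : ℝ) ^ 2 + (m.2 : ℝ) ^ 2) ^ k) * (‖tcoef f m‖₊ : ℝ≥0∞) ^ 2)
    ^ (1/2 : ℝ)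

/-- A global smooth solution of the IPM system on the torus `T²`:
`∂_t ρ + u·∇ρ = 0`, `∇·u = 0`, `u + ∇p = -(0,ρ)` for all `t ≥ 0`, with `ρ, u, p` smooth on
`ℝ² × [0,∞)` and `2π`-periodic in both space variables. -/
structure IsIPMSolT2 (ρ : Pt → ℝ → ℝ) (u : Pt → ℝ → Pt) (p : Pt → ℝ → ℝ) : Prop where
  smooth_rho : ContDiff ℝ (⊤ : ℕ∞) fun q : Pt × ℝ => ρ q.1 q.2
  smooth_u : ContDiff ℝ (⊤ : ℕ∞) fun q : Pt × ℝ => u q.1 q.2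
  smooth_p : ContDiff ℝ (⊤ : ℕ∞) fun q : Pt × ℝ => p q.1 q.2
  per_rho : ∀ t : ℝ, 0 ≤ t → Per2 fun x => ρ x t
  per_u1 : ∀ t : ℝ, 0 ≤ t → Per2 fun x => (u x t).1
  per_u2 : ∀ t : ℝ, 0 ≤ t → Per2 fun x => (u x t).2
  per_p : ∀ t : ℝ, 0 ≤ t → Per2 fun x => p x t
  transport : ∀ x : Pt, ∀ t : ℝ, 0 ≤ t →
    deriv (fun τ => ρ x τ) t
      + (u x t).1 * pd1 (fun y => ρ y t) x + (u x t).2 * pd2 (fun y => ρ y t) x = 0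
  incomp : ∀ x : Pt, ∀ t : ℝ, 0 ≤ t →
    pd1 (fun y => (u y t).1) x + pd2 (fun y => (u y t).2) x = 0
  darcy1 : ∀ x : Pt, ∀ t : ℝ, 0 ≤ t → (u x t).1 + pd1 (fun y => p y t) x = 0
  darcy2 : ∀ x : Pt, ∀ t : ℝ, 0 ≤ t → (u x t).2 + pd2 (fun y => p y t) x = -ρ x t

namespace IPMaux

lemma isCompact_Q2 : IsCompact Q2 := isCompact_Icc.prod isCompact_Icc

lemma measurableSet_Q2 : MeasurableSet Q2 := (measurableSet_Icc.prod measurableSet_Icc)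

/-- directional derivative of a jointly defined function -/
def pD (H : Pt → ℝ → ℝ) (v : Pt × ℝ) (x : Pt) (t : ℝ) : ℝ :=
  fderiv ℝ (fun q : Pt × ℝ => H q.1 q.2) (x, t) v

section smoothH
variable {H : Pt → ℝ → ℝ}

lemma hasFDerivAt_H (hH : ContDiff ℝ (⊤ : ℕ∞) fun q : Pt × ℝ => H q.1 q.2) (x : Pt) (t : ℝ) :
    HasFDerivAt (fun q : Pt × ℝ => H q.1 q.2)
      (fderiv ℝ (fun q : Pt × ℝ => H q.1 q.2) (x, t)) (x, t) :=
  ((hH.differentiable (by simp)).differentiableAt).hasFDerivAt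

lemma hasDerivAt_slice1 (hH : ContDiff ℝ (⊤ : ℕ∞) fun q : Pt × ℝ => H q.1 q.2) (x : Pt) (t : ℝ) :
    HasDerivAt (fun y => H (y, x.2) t) (pD H ((1,0),0) x t) x.1 := by
  have hγ : HasDerivAt (fun y : ℝ => (((y, x.2), t) : Pt × ℝ)) (((1,0),0) : Pt × ℝ) x.1 :=
    ((hasDerivAt_id _).prodMk (hasDerivAt_const _ _)).prodMk (hasDerivAt_const _ _)
  exact (hasFDerivAt_H hH x t).comp_hasDerivAt x.1 hγ

lemma hasDerivAt_slice2 (hH : ContDiff ℝ (⊤ : ℕ∞) fun q : Pt × ℝ => H q.1 q.2) (x : Pt) (t : ℝ) :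
    HasDerivAt (fun y => H (x.1, y) t) (pD H ((0,1),0) x t) x.2 := by
  have hγ : HasDerivAt (fun y : ℝ => (((x.1, y), t) : Pt × ℝ)) (((0,1),0) : Pt × ℝ) x.2 :=
    ((hasDerivAt_const _ _).prodMk (hasDerivAt_id _)).prodMk (hasDerivAt_const _ _)
  exact (hasFDerivAt_H hH x t).comp_hasDerivAt x.2 hγ

lemma hasDerivAt_sliceT (hH : ContDiff ℝ (⊤ : ℕ∞) fun q : Pt × ℝ => H q.1 q.2) (x : Pt) (t : ℝ) :
    HasDerivAt (fun τ => H x τ) (pD H ((0,0),1) x t) t := by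
  have hγ : HasDerivAt (fun τ : ℝ => ((x, τ) : Pt × ℝ)) (((0,0),1) : Pt × ℝ) t :=
    (hasDerivAt_const _ _).prodMk (hasDerivAt_id _)
  exact (hasFDerivAt_H hH x t).comp_hasDerivAt t hγ

lemma pd1_eq (hH : ContDiff ℝ (⊤ : ℕ∞) fun q : Pt × ℝ => H q.1 q.2) (x : Pt) (t : ℝ) : pd1 (fun y => H y t) x = pD H ((1,0),0) x t := by
  have := hasDerivAt_slice1 hH x t
  simpa [pd1] using this.deriv

lemma pd2_eq (hH : ContDiff ℝ (⊤ : ℕ∞) fun q : Pt × ℝ => H q.1 q.2) (x : Pt) (t : ℝ) : pd2 (fun y => H y t) x = pD H ((0,1),0) x t := by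
  have := hasDerivAt_slice2 hH x t
  simpa [pd2] using this.deriv

lemma derivT_eq (hH : ContDiff ℝ (⊤ : ℕ∞) fun q : Pt × ℝ => H q.1 q.2) (x : Pt) (t : ℝ) : deriv (fun τ => H x τ) t = pD H ((0,0),1) x t :=
  (hasDerivAt_sliceT hH x t).deriv

lemma continuous_pD (hH : ContDiff ℝ (⊤ : ℕ∞) fun q : Pt × ℝ => H q.1 q.2) (v : Pt × ℝ) : Continuous fun q : Pt × ℝ => pD H v q.1 q.2 := by
  have h : Continuous fun q : Pt × ℝ => fderiv ℝ (fun q : Pt × ℝ => H q.1 q.2) q v :=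
    (hH.continuous_fderiv (by simp)).clm_apply continuous_const
  exact h

end smoothH
section divlemma

lemma integrableOn_Q2 {f : Pt → ℝ} (hf : Continuous f) : IntegrableOn f Q2 :=
  (hf.continuousOn).integrableOn_compact isCompact_Q2

/-- divergence theorem on the square with vanishing boundary contributions -/
lemma div_int_zero (F G F₁ G₂ : Pt → ℝ)
    (hF₁ : ∀ x : Pt, HasDerivAt (fun y => F (y, x.2)) (F₁ x) x.1)
    (hG₂ : ∀ x : Pt, HasDerivAt (fun y => G (x.1, y)) (G₂ x) x.2)
    (hF₁c : Continuous F₁) (hG₂c : Continuous G₂)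
    (hFper : ∀ y : ℝ, F (π, y) = F (-π, y))
    (hGper : ∀ x : ℝ, G (x, π) = G (x, -π)) :
    ∫ x in Q2, (F₁ x + G₂ x) = 0 := by
  have hπ : (-π : ℝ) ≤ π := by linarith [pi_pos]
  have h1 : ∫ x in Q2, F₁ x = 0 := by
    have hint : IntegrableOn F₁ Q2 := integrableOn_Q2 hF₁c
    rw [Q2, Measure.volume_eq_prod ℝ ℝ] at hint ⊢
    rw [setIntegral_prod _ hint]
    have hswap : ∫ a in Set.Icc (-π) π, ∫ b in Set.Icc (-π) π, F₁ (a, b)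
        = ∫ b in Set.Icc (-π) π, ∫ a in Set.Icc (-π) π, F₁ (a, b) := by
      apply integral_integral_swap
      rw [Measure.prod_restrict]
      exact hint
    rw [hswap]
    have inner : ∀ b : ℝ, ∫ a in Set.Icc (-π) π, F₁ (a, b) = 0 := by
      intro b
      rw [integral_Icc_eq_integral_Ioc, ← intervalIntegral.integral_of_le hπ]
      rw [intervalIntegral.integral_eq_sub_of_hasDerivAt
        (f := fun a => F (a, b)) (fun a _ => hF₁ (a, b))
        ((hF₁c.comp (continuous_id.prodMk continuous_const)).intervalIntegrable _ _)]
      rw [hFper b, sub_self]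
    simp only [inner, integral_zero]
  have h2 : ∫ x in Q2, G₂ x = 0 := by
    have hint : IntegrableOn G₂ Q2 := integrableOn_Q2 hG₂c
    rw [Q2, Measure.volume_eq_prod ℝ ℝ] at hint ⊢
    rw [setIntegral_prod _ hint]
    have inner : ∀ a : ℝ, ∫ b in Set.Icc (-π) π, G₂ (a, b) = 0 := by
      intro a
      rw [integral_Icc_eq_integral_Ioc, ← intervalIntegral.integral_of_le hπ]
      rw [intervalIntegral.integral_eq_sub_of_hasDerivAt
        (f := fun b => G (a, b)) (fun b _ => hG₂ (a, b))
        ((hG₂c.comp (continuous_const.prodMk continuous_id)).intervalIntegrable _ _)]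
      rw [hGper a, sub_self]
    simp only [inner, integral_zero]
  rw [integral_add (integrableOn_Q2 hF₁c) (integrableOn_Q2 hG₂c), h1, h2, add_zero]

end divlemma

section paramderiv

/-- differentiation under the integral sign over `Q2` -/
lemma hasDerivAt_intQ2 (f df : Pt → ℝ → ℝ)
    (hf : Continuous fun q : Pt × ℝ => f q.1 q.2)
    (hdf : Continuous fun q : Pt × ℝ => df q.1 q.2)
    (hd : ∀ (x : Pt) (t : ℝ), HasDerivAt (fun τ => f x τ) (df x t) t) (t : ℝ) :
    HasDerivAt (fun τ => ∫ x in Q2, f x τ) (∫ x in Q2, df x t) t := by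
  -- bound on compact set
  obtain ⟨C, hC⟩ : ∃ C, ∀ q ∈ Q2 ×ˢ Set.Icc (t - 1) (t + 1),
      ‖(fun q : Pt × ℝ => df q.1 q.2) q‖ ≤ C :=
    (isCompact_Q2.prod isCompact_Icc).exists_bound_of_continuousOn hdf.continuousOn
  have hQfin : volume Q2 < ⊤ := isCompact_Q2.measure_lt_top
  have := hasDerivAt_integral_of_dominated_loc_of_deriv_le
    (F := fun τ x => f x τ) (F' := fun τ x => df x τ) (x₀ := t)
    (bound := fun _ => C) (s := Metric.ball t 1) (Metric.ball_mem_nhds t one_pos)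
    (Eventually.of_forall fun τ =>
      ((hf.comp (continuous_id.prodMk continuous_const)).aestronglyMeasurable))
    (integrableOn_Q2 (hf.comp (continuous_id.prodMk continuous_const)))
    ((hdf.comp (continuous_id.prodMk continuous_const)).aestronglyMeasurable)
    ?_ ?_ ?_
  · exact this.2
  · refine (ae_restrict_iff' measurableSet_Q2).2 (Eventually.of_forall fun x hx => ?_)
    intro τ hτ
    have hτ' : τ ∈ Set.Icc (t - 1) (t + 1) := by
      have := Metric.mem_ball.1 hτ
      rw [Real.dist_eq] at this
      constructor <;> [linarith [abs_lt.1 this |>.1]; linarith [abs_lt.1 this |>.2]]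
    exact hC (x, τ) ⟨hx, hτ'⟩
  · exact (integrableOn_const hQfin.ne)
  · exact (ae_restrict_iff' measurableSet_Q2).2 (Eventually.of_forall fun x _ =>
      fun τ _ => hd x τ)

end paramderiv

section helpers

/-- derivative of `r ↦ (max r 0)^2` -/
lemma hasDerivAt_maxsq (r : ℝ) :
    HasDerivAt (fun r : ℝ => (max r 0) ^ 2) (2 * max r 0) r := by
  rcases lt_trichotomy r 0 with h | h | h
  · have : (fun r : ℝ => (max r 0) ^ 2) =ᶠ[nhds r] fun _ => (0:ℝ) := by
      filter_upwards [eventually_lt_nhds h] with y hy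
      simp [max_eq_right hy.le]
    have h0 : HasDerivAt (fun r : ℝ => (max r 0) ^ 2) 0 r :=
      (hasDerivAt_const r (0:ℝ)).congr_of_eventuallyEq this
    simpa [max_eq_right h.le] using h0
  · subst h
    rw [hasDerivAt_iff_tendsto_slope]
    have hb : ∀ y : ℝ, y ≠ 0 → |slope (fun r : ℝ => (max r 0) ^ 2) 0 y - 0| ≤ |y| := by
      intro y hy
      have : slope (fun r : ℝ => (max r 0) ^ 2) 0 y = (max y 0) ^ 2 / y := by
        simp [slope_def_field]
      rw [this, sub_zero]
      rcases le_or_gt y 0 with h' | h'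
      · simp [max_eq_right h']
      · rw [max_eq_left h'.le, abs_div, abs_pow, pow_two, mul_div_assoc,
          div_self (abs_ne_zero.2 hy), mul_one]
    simp only [max_self, mul_zero]
    rw [Metric.tendsto_nhdsWithin_nhds]
    intro ε hε
    refine ⟨ε, hε, fun y hy hd => ?_⟩
    have hy' : y ≠ 0 := hy
    calc dist (slope (fun r : ℝ => (max r 0) ^ 2) 0 y) 0
        = |slope (fun r : ℝ => (max r 0) ^ 2) 0 y - 0| := Real.dist_eq _ _
      _ ≤ |y| := hb y hy'
      _ = |y - 0| := by rw [sub_zero]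
      _ = dist y 0 := (Real.dist_eq _ _).symm
      _ < ε := hd
  · have : (fun r : ℝ => (max r 0) ^ 2) =ᶠ[nhds r] fun y => y ^ 2 := by
      filter_upwards [eventually_gt_nhds h] with y hy
      simp [max_eq_left hy.le]
    have h2 : HasDerivAt (fun y : ℝ => y ^ 2) (2 * r) r := by
      simpa using (hasDerivAt_pow 2 r)
    have h0 : HasDerivAt (fun r : ℝ => (max r 0) ^ 2) (2 * r) r :=
      h2.congr_of_eventuallyEq this
    simpa [max_eq_left h.le] using h0

lemma continuous_maxsq : Continuous fun r : ℝ => (max r 0) ^ 2 := by fun_prop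

/-- periodic reduction to the fundamental domain -/
lemma per2_exists_rep {f : Pt → ℝ} (hf : Per2 f) (x : Pt) : ∃ y ∈ Q2, f y = f x := by
  have red : ∀ (g : ℝ → ℝ), (∀ a, g (a + 2 * π) = g a) → ∀ a : ℝ,
      ∃ b ∈ Set.Icc (-π) π, g b = g a := by
    intro g hg a
    have hper : Function.Periodic g (2 * π) := hg
    set n : ℤ := ⌊(a + π) / (2 * π)⌋ with hn
    refine ⟨a - n * (2 * π), ⟨?_, ?_⟩, hper.sub_int_mul_eq n⟩
    · have h1 : (n : ℝ) ≤ (a + π) / (2 * π) := Int.floor_le _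
      have h2 : (n : ℝ) * (2 * π) ≤ a + π := by
        rwa [← le_div_iff₀ (by positivity)]
      linarith
    · have h1 : (a + π) / (2 * π) < n + 1 := Int.lt_floor_add_one _
      have h2 : a + π < ((n : ℝ) + 1) * (2 * π) := by
        rwa [← div_lt_iff₀ (by positivity)]
      nlinarith [pi_pos]
  obtain ⟨b1, hb1, he1⟩ := red (fun a => f (a, x.2)) (fun a => (hf (a, x.2)).1) x.1
  obtain ⟨b2, hb2, he2⟩ := red (fun a => f (b1, a)) (fun a => (hf (b1, a)).2) x.2
  exact ⟨(b1, b2), ⟨hb1, hb2⟩, he2.trans he1⟩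

lemma per2_bddAbove_abs {f : Pt → ℝ} (hf : Per2 f) (hc : Continuous f) :
    BddAbove (Set.range fun x => |f x|) := by
  obtain ⟨C, hC⟩ := isCompact_Q2.exists_bound_of_continuousOn hc.continuousOn
  refine ⟨C, fun v hv => ?_⟩
  obtain ⟨x, rfl⟩ := hv
  obtain ⟨y, hy, he⟩ := per2_exists_rep hf x
  show |f x| ≤ C
  rw [← he]
  simpa [Real.norm_eq_abs] using hC y hy

lemma integral_abs_snd_Q2 : ∫ x in Q2, |x.2| = 2 * π ^ 3 := by
  have hπ : (0:ℝ) < π := pi_pos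
  have hint : IntegrableOn (fun x : Pt => |x.2|) Q2 :=
    integrableOn_Q2 (by fun_prop)
  rw [Q2, Measure.volume_eq_prod ℝ ℝ] at hint ⊢
  rw [setIntegral_prod _ hint]
  have inner : ∫ b in Set.Icc (-π) π, |b| = π ^ 2 := by
    rw [integral_Icc_eq_integral_Ioc, ← intervalIntegral.integral_of_le (by linarith)]
    have hsplit : ∫ b in (-π)..π, |b| =
        (∫ b in (-π)..(0:ℝ), |b|) + ∫ b in (0:ℝ)..π, |b| :=
      (intervalIntegral.integral_add_adjacent_intervals
        ((continuous_abs).intervalIntegrable _ _)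
        ((continuous_abs).intervalIntegrable _ _)).symm
    have h1 : ∫ b in (-π)..(0:ℝ), |b| = π ^ 2 / 2 := by
      rw [intervalIntegral.integral_congr (g := fun b => -b)
        (fun b hb => by
          rw [Set.uIcc_of_le (by linarith)] at hb
          exact abs_of_nonpos hb.2)]
      rw [intervalIntegral.integral_neg, integral_id]
      ring
    have h2 : ∫ b in (0:ℝ)..π, |b| = π ^ 2 / 2 := by
      rw [intervalIntegral.integral_congr (g := fun b => b)
        (fun b hb => by
          rw [Set.uIcc_of_le (by linarith)] at hb
          exact abs_of_nonneg hb.1)]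
      rw [integral_id]
      ring
    rw [hsplit, h1, h2]; ring
  simp only [inner]
  rw [setIntegral_const]
  simp only [measureReal_def, Real.volume_Icc, smul_eq_mul]
  rw [show π - -π = 2 * π by ring, ENNReal.toReal_ofReal (by positivity)]
  ring

lemma lintegral_Ioi_le_of_forall (φ : ℝ → ℝ) (hφ : Continuous φ) (hpos : ∀ t, 0 ≤ φ t)
    (B : ℝ) (hB : ∀ n : ℕ, ∫ t in Set.Ioc (0:ℝ) (n:ℝ), φ t ≤ B) :
    ∫⁻ t in Set.Ioi (0:ℝ), ENNReal.ofReal (φ t) ≤ ENNReal.ofReal B := by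
  set F : ℝ → ℝ≥0∞ := fun t => ENNReal.ofReal (φ t) with hF
  have hFm : Measurable F := by
    exact ENNReal.measurable_ofReal.comp hφ.measurable
  have key : ∀ n : ℕ, ∫⁻ t in Set.Ioc (0:ℝ) (n:ℝ), F t ≤ ENNReal.ofReal B := by
    intro n
    have hint : IntegrableOn φ (Set.Ioc (0:ℝ) (n:ℝ)) :=
      ((hφ.continuousOn).integrableOn_compact isCompact_Icc).mono_set Set.Ioc_subset_Icc_self
    rw [← ofReal_integral_eq_lintegral_ofReal hint (Eventually.of_forall fun t => hpos t)]
    exact ENNReal.ofReal_le_ofReal (hB n)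
  -- monotone union
  have hmon : Monotone fun n : ℕ => (Set.Ioc (0:ℝ) (n:ℝ)).indicator F := by
    intro m n hmn
    exact Set.indicator_le_indicator_of_subset
      (Set.Ioc_subset_Ioc le_rfl (by exact_mod_cast hmn)) (fun t => zero_le)
  have hcup : (fun t => ⨆ n : ℕ, (Set.Ioc (0:ℝ) (n:ℝ)).indicator F t)
      = (Set.Ioi (0:ℝ)).indicator F := by
    funext t
    rcases le_or_gt t 0 with h | h
    · simp [Set.indicator_apply, not_lt.2 h, h.not_gt]
    · obtain ⟨n, hn⟩ := exists_nat_ge t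
      apply le_antisymm
      · exact iSup_le fun m => Set.indicator_le_indicator_of_subset
          (Set.Ioc_subset_Ioi_self) (fun t => zero_le) t
      · refine le_trans (Set.indicator_le_self' (fun _ _ => zero_le) t) ?_
        have hmem : t ∈ Set.Ioc (0:ℝ) (n:ℝ) := ⟨h, hn⟩
        refine le_trans (le_of_eq (Set.indicator_of_mem hmem F).symm)
          (le_iSup (fun m : ℕ => (Set.Ioc (0:ℝ) (m:ℝ)).indicator F t) n)
  calc ∫⁻ t in Set.Ioi (0:ℝ), F t
      = ∫⁻ t, (Set.Ioi (0:ℝ)).indicator F t := (lintegral_indicator measurableSet_Ioi F).symm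
    _ = ∫⁻ t, ⨆ n : ℕ, (Set.Ioc (0:ℝ) (n:ℝ)).indicator F t := by rw [hcup]
    _ = ⨆ n : ℕ, ∫⁻ t, (Set.Ioc (0:ℝ) (n:ℝ)).indicator F t :=
        lintegral_iSup (fun n => hFm.indicator measurableSet_Ioc) hmon
    _ = ⨆ n : ℕ, ∫⁻ t in Set.Ioc (0:ℝ) (n:ℝ), F t := by
        simp_rw [lintegral_indicator measurableSet_Ioc F]
    _ ≤ ENNReal.ofReal B := iSup_le key

end helpers

end IPMaux

namespace IPMaux2
open IPMaux

variable {ρ : Pt → ℝ → ℝ} {u : Pt → ℝ → Pt} {p : Pt → ℝ → ℝ}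

section basic

lemma contSlice {H : Pt → ℝ → ℝ} (h : Continuous fun q : Pt × ℝ => H q.1 q.2) (t : ℝ) :
    Continuous fun x : Pt => H x t :=
  h.comp (continuous_id.prodMk continuous_const)

lemma smooth_u1 (hs : IsIPMSolT2 ρ u p) :
    ContDiff ℝ (⊤ : ℕ∞) fun q : Pt × ℝ => (u q.1 q.2).1 :=
  (contDiff_fst).comp hs.smooth_u

lemma smooth_u2 (hs : IsIPMSolT2 ρ u p) :
    ContDiff ℝ (⊤ : ℕ∞) fun q : Pt × ℝ => (u q.1 q.2).2 :=
  (contDiff_snd).comp hs.smooth_u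

lemma transport' (hs : IsIPMSolT2 ρ u p) (x : Pt) (t : ℝ) (ht : 0 ≤ t) :
    pD ρ ((0,0),1) x t
      + (u x t).1 * pD ρ ((1,0),0) x t + (u x t).2 * pD ρ ((0,1),0) x t = 0 := by
  have h := hs.transport x t ht
  have e0 : deriv (fun τ => ρ x τ) t = pD ρ ((0,0),1) x t := derivT_eq hs.smooth_rho x t
  have e1 : pd1 (fun y => ρ y t) x = pD ρ ((1,0),0) x t := pd1_eq hs.smooth_rho x t
  have e2 : pd2 (fun y => ρ y t) x = pD ρ ((0,1),0) x t := pd2_eq hs.smooth_rho x t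
  rw [e0, e1, e2] at h
  exact h

lemma incomp' (hs : IsIPMSolT2 ρ u p) (x : Pt) (t : ℝ) (ht : 0 ≤ t) :
    pD (fun y τ => (u y τ).1) ((1,0),0) x t + pD (fun y τ => (u y τ).2) ((0,1),0) x t = 0 := by
  have h := hs.incomp x t ht
  have e1 : pd1 (fun y => (u y t).1) x = pD (fun y τ => (u y τ).1) ((1,0),0) x t :=
    pd1_eq (H := fun y τ => (u y τ).1) (smooth_u1 hs) x t
  have e2 : pd2 (fun y => (u y t).2) x = pD (fun y τ => (u y τ).2) ((0,1),0) x t :=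
    pd2_eq (H := fun y τ => (u y τ).2) (smooth_u2 hs) x t
  rw [e1, e2] at h
  exact h

lemma darcy1' (hs : IsIPMSolT2 ρ u p) (x : Pt) (t : ℝ) (ht : 0 ≤ t) :
    (u x t).1 + pD p ((1,0),0) x t = 0 := by
  have h := hs.darcy1 x t ht
  have e1 : pd1 (fun y => p y t) x = pD p ((1,0),0) x t := pd1_eq hs.smooth_p x t
  rw [e1] at h
  exact h

lemma darcy2' (hs : IsIPMSolT2 ρ u p) (x : Pt) (t : ℝ) (ht : 0 ≤ t) :
    (u x t).2 + pD p ((0,1),0) x t = -ρ x t := by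
  have h := hs.darcy2 x t ht
  have e2 : pd2 (fun y => p y t) x = pD p ((0,1),0) x t := pd2_eq hs.smooth_p x t
  rw [e2] at h
  exact h

/-- periodic endpoint identities -/
lemma per2_fst_end {f : Pt → ℝ} (hf : Per2 f) (y : ℝ) : f (π, y) = f (-π, y) := by
  have h := (hf (-π, y)).1
  have e : ((-π + 2 * π : ℝ), y) = ((π : ℝ), y) := by rw [show (-π + 2 * π : ℝ) = π by ring]
  rw [← e]
  exact h

lemma per2_snd_end {f : Pt → ℝ} (hf : Per2 f) (a : ℝ) : f (a, π) = f (a, -π) := by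
  have h := (hf (a, -π)).2
  have e : ((a : ℝ), (-π + 2 * π : ℝ)) = ((a : ℝ), (π : ℝ)) := by rw [show (-π + 2 * π : ℝ) = π by ring]
  rw [← e]
  exact h

end basic

section energy

lemma energy_hasDerivAt (hs : IsIPMSolT2 ρ u p) (t : ℝ) :
    HasDerivAt (fun τ => ∫ x in Q2, x.2 * ρ x τ)
      (∫ x in Q2, x.2 * pD ρ ((0,0),1) x t) t := by
  refine hasDerivAt_intQ2 (fun x τ => x.2 * ρ x τ) (fun x τ => x.2 * pD ρ ((0,0),1) x τ)
    ?_ ?_ (fun x τ => (hasDerivAt_sliceT hs.smooth_rho x τ).const_mul x.2) t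
  · exact (continuous_fst.snd.mul hs.smooth_rho.continuous)
  · exact (continuous_fst.snd.mul (continuous_pD hs.smooth_rho _))

lemma spatial_identity (hs : IsIPMSolT2 ρ u p)
    (hodd : ∀ x : Pt, ∀ t : ℝ, 0 ≤ t → ρ (x.1, -x.2) t = -ρ x t)
    (t : ℝ) (ht : 0 ≤ t) :
    ∫ x in Q2, x.2 * pD ρ ((0,0),1) x t
      = -(∫ x in Q2, ((u x t).1 ^ 2 + (u x t).2 ^ 2)) := by
  have hu1 := smooth_u1 hs
  have hu2 := smooth_u2 hs
  have hρ := hs.smooth_rho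
  have hp := hs.smooth_p
  set F₁ : Pt → ℝ := fun x =>
    x.2 * (pD (fun y τ => (u y τ).1) ((1,0),0) x t * ρ x t
        + (u x t).1 * pD ρ ((1,0),0) x t)
      + (pD p ((1,0),0) x t * (u x t).1 + p x t * pD (fun y τ => (u y τ).1) ((1,0),0) x t)
    with hF₁
  set G₂ : Pt → ℝ := fun x =>
    (1 * ((u x t).2 * ρ x t)
        + x.2 * (pD (fun y τ => (u y τ).2) ((0,1),0) x t * ρ x t
          + (u x t).2 * pD ρ ((0,1),0) x t))
      + (pD p ((0,1),0) x t * (u x t).2 + p x t * pD (fun y τ => (u y τ).2) ((0,1),0) x t)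
    with hG₂
  have contF₁ : Continuous F₁ := by
    rw [hF₁]
    exact (continuous_snd.mul
        (((contSlice (continuous_pD (H := fun y τ => (u y τ).1) hu1 _) t).mul
          (contSlice hρ.continuous t)).add
        ((contSlice (H := fun y τ => (u y τ).1) hu1.continuous t).mul
          (contSlice (continuous_pD hρ _) t)))).add
      (((contSlice (continuous_pD hp _) t).mul
          (contSlice (H := fun y τ => (u y τ).1) hu1.continuous t)).add
        ((contSlice hp.continuous t).mul
          (contSlice (continuous_pD (H := fun y τ => (u y τ).1) hu1 _) t)))
  have contG₂ : Continuous G₂ := by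
    rw [hG₂]
    exact ((continuous_const.mul
        ((contSlice (H := fun y τ => (u y τ).2) hu2.continuous t).mul
          (contSlice hρ.continuous t))).add
      (continuous_snd.mul
        (((contSlice (continuous_pD (H := fun y τ => (u y τ).2) hu2 _) t).mul
          (contSlice hρ.continuous t)).add
        ((contSlice (H := fun y τ => (u y τ).2) hu2.continuous t).mul
          (contSlice (continuous_pD hρ _) t))))).add
      (((contSlice (continuous_pD hp _) t).mul
          (contSlice (H := fun y τ => (u y τ).2) hu2.continuous t)).add
        ((contSlice hp.continuous t).mul
          (contSlice (continuous_pD (H := fun y τ => (u y τ).2) hu2 _) t)))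
  have hρπ : ∀ a : ℝ, ρ (a, π) t = 0 := by
    intro a
    have h1 : ρ (a, -π) t = -ρ (a, π) t := hodd (a, π) t ht
    have h2 : ρ (a, π) t = ρ (a, -π) t :=
      per2_snd_end (f := fun x => ρ x t) (hs.per_rho t ht) a
    linarith
  have hρmπ : ∀ a : ℝ, ρ (a, -π) t = 0 := by
    intro a
    have h2 : ρ (a, π) t = ρ (a, -π) t :=
      per2_snd_end (f := fun x => ρ x t) (hs.per_rho t ht) a
    rw [← h2]
    exact hρπ a
  have hdiv : ∫ x in Q2, (F₁ x + G₂ x) = 0 := by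
    refine div_int_zero
      (fun x => x.2 * ((u x t).1 * ρ x t) + p x t * (u x t).1)
      (fun x => x.2 * ((u x t).2 * ρ x t) + p x t * (u x t).2)
      F₁ G₂ ?_ ?_ contF₁ contG₂ ?_ ?_
    · intro x
      rw [hF₁]
      exact (((hasDerivAt_slice1 (H := fun y τ => (u y τ).1) hu1 x t).mul
          (hasDerivAt_slice1 hρ x t)).const_mul x.2).add
        ((hasDerivAt_slice1 hp x t).mul
          (hasDerivAt_slice1 (H := fun y τ => (u y τ).1) hu1 x t))
    · intro x
      rw [hG₂]
      exact ((hasDerivAt_id x.2).mul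
          ((hasDerivAt_slice2 (H := fun y τ => (u y τ).2) hu2 x t).mul
            (hasDerivAt_slice2 hρ x t))).add
        ((hasDerivAt_slice2 hp x t).mul
          (hasDerivAt_slice2 (H := fun y τ => (u y τ).2) hu2 x t))
    · intro y
      have eu1 : (u ((π:ℝ), y) t).1 = (u ((-π:ℝ), y) t).1 :=
        per2_fst_end (f := fun x => (u x t).1) (hs.per_u1 t ht) y
      have eρ : ρ ((π:ℝ), y) t = ρ ((-π:ℝ), y) t :=
        per2_fst_end (f := fun x => ρ x t) (hs.per_rho t ht) y
      have ep : p ((π:ℝ), y) t = p ((-π:ℝ), y) t :=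
        per2_fst_end (f := fun x => p x t) (hs.per_p t ht) y
      show ((π:ℝ), y).2 * ((u ((π:ℝ), y) t).1 * ρ ((π:ℝ), y) t)
            + p ((π:ℝ), y) t * (u ((π:ℝ), y) t).1
          = ((-π:ℝ), y).2 * ((u ((-π:ℝ), y) t).1 * ρ ((-π:ℝ), y) t)
            + p ((-π:ℝ), y) t * (u ((-π:ℝ), y) t).1
      rw [eu1, eρ, ep]
    · intro a
      have eu2 : (u (a, (π:ℝ)) t).2 = (u (a, (-π:ℝ)) t).2 :=
        per2_snd_end (f := fun x => (u x t).2) (hs.per_u2 t ht) a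
      have ep : p (a, (π:ℝ)) t = p (a, (-π:ℝ)) t :=
        per2_snd_end (f := fun x => p x t) (hs.per_p t ht) a
      show (a, (π:ℝ)).2 * ((u (a, (π:ℝ)) t).2 * ρ (a, (π:ℝ)) t)
            + p (a, (π:ℝ)) t * (u (a, (π:ℝ)) t).2
          = (a, (-π:ℝ)).2 * ((u (a, (-π:ℝ)) t).2 * ρ (a, (-π:ℝ)) t)
            + p (a, (-π:ℝ)) t * (u (a, (-π:ℝ)) t).2
      rw [eu2, ep]
      show π * ((u (a, (-π:ℝ)) t).2 * ρ (a, (π:ℝ)) t) + _ = _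
      rw [hρπ a, hρmπ a]
      ring
  have hpt : ∀ x : Pt, x.2 * pD ρ ((0,0),1) x t
      = (-((u x t).1 ^ 2 + (u x t).2 ^ 2)) - (F₁ x + G₂ x) := by
    intro x
    have h1 := transport' hs x t ht
    have h2 := incomp' hs x t ht
    have h3 := darcy1' hs x t ht
    have h4 := darcy2' hs x t ht
    rw [hF₁, hG₂]
    linear_combination x.2 * h1 + (x.2 * ρ x t + p x t) * h2 + (u x t).1 * h3 + (u x t).2 * h4
  have hint1 : IntegrableOn (fun x : Pt => ((u x t).1 ^ 2 + (u x t).2 ^ 2)) Q2 :=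
    integrableOn_Q2
      (((contSlice (H := fun y τ => (u y τ).1) hu1.continuous t).pow 2).add
        ((contSlice (H := fun y τ => (u y τ).2) hu2.continuous t).pow 2))
  calc ∫ x in Q2, x.2 * pD ρ ((0,0),1) x t
      = ∫ x in Q2, ((-((u x t).1 ^ 2 + (u x t).2 ^ 2)) - (F₁ x + G₂ x)) :=
        setIntegral_congr_fun measurableSet_Q2 (fun x _ => hpt x)
    _ = (∫ x in Q2, -((u x t).1 ^ 2 + (u x t).2 ^ 2)) - ∫ x in Q2, (F₁ x + G₂ x) :=
        integral_sub hint1.neg ((integrableOn_Q2 contF₁).add (integrableOn_Q2 contG₂))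
    _ = -(∫ x in Q2, ((u x t).1 ^ 2 + (u x t).2 ^ 2)) := by
        rw [hdiv, integral_neg, sub_zero]

end energy
end IPMaux2
namespace IPMaux2
open IPMaux

variable {ρ : Pt → ℝ → ℝ} {u : Pt → ℝ → Pt} {p : Pt → ℝ → ℝ}

section conserve

lemma gg_hasDerivAt (M s : ℝ) :
    HasDerivAt (fun s : ℝ => (max (s ^ 2 - M ^ 2) 0) ^ 2)
      (2 * max (s ^ 2 - M ^ 2) 0 * (2 * s)) s := by
  have h1 : HasDerivAt (fun s : ℝ => s ^ 2 - M ^ 2) (2 * s) s := by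
    simpa using (hasDerivAt_pow 2 s).sub_const (M ^ 2)
  exact (hasDerivAt_maxsq _).comp s h1

lemma psi_hasDerivAt (hs : IsIPMSolT2 ρ u p) (M : ℝ) (t : ℝ) :
    HasDerivAt (fun τ => ∫ x in Q2, (max ((ρ x τ) ^ 2 - M ^ 2) 0) ^ 2)
      (∫ x in Q2, (2 * max ((ρ x t) ^ 2 - M ^ 2) 0 * (2 * ρ x t)) * pD ρ ((0,0),1) x t) t := by
  have hρ := hs.smooth_rho
  refine hasDerivAt_intQ2 (fun x τ => (max ((ρ x τ) ^ 2 - M ^ 2) 0) ^ 2)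
    (fun x τ => (2 * max ((ρ x τ) ^ 2 - M ^ 2) 0 * (2 * ρ x τ)) * pD ρ ((0,0),1) x τ)
    ?_ ?_ (fun x τ => (gg_hasDerivAt M (ρ x τ)).comp τ (hasDerivAt_sliceT hρ x τ)) t
  · exact (((hρ.continuous.pow 2).sub continuous_const).max continuous_const).pow 2
  · exact ((continuous_const.mul
      (((hρ.continuous.pow 2).sub continuous_const).max continuous_const)).mul
      (continuous_const.mul hρ.continuous)).mul (continuous_pD hρ _)

lemma psi_deriv_zero (hs : IsIPMSolT2 ρ u p) (M : ℝ) (t : ℝ) (ht : 0 ≤ t) :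
    ∫ x in Q2, (2 * max ((ρ x t) ^ 2 - M ^ 2) 0 * (2 * ρ x t)) * pD ρ ((0,0),1) x t = 0 := by
  have hu1 := smooth_u1 hs
  have hu2 := smooth_u2 hs
  have hρ := hs.smooth_rho
  set F₁ : Pt → ℝ := fun x =>
    (2 * max ((ρ x t) ^ 2 - M ^ 2) 0 * (2 * ρ x t)) * pD ρ ((1,0),0) x t * (u x t).1
      + (max ((ρ x t) ^ 2 - M ^ 2) 0) ^ 2 * pD (fun y τ => (u y τ).1) ((1,0),0) x t with hF₁
  set G₂ : Pt → ℝ := fun x =>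
    (2 * max ((ρ x t) ^ 2 - M ^ 2) 0 * (2 * ρ x t)) * pD ρ ((0,1),0) x t * (u x t).2
      + (max ((ρ x t) ^ 2 - M ^ 2) 0) ^ 2 * pD (fun y τ => (u y τ).2) ((0,1),0) x t with hG₂
  have cmax : Continuous fun x : Pt => max ((ρ x t) ^ 2 - M ^ 2) 0 :=
    (((contSlice hρ.continuous t).pow 2).sub continuous_const).max continuous_const
  have contF₁ : Continuous F₁ := by
    rw [hF₁]
    exact (((continuous_const.mul cmax).mul
        (continuous_const.mul (contSlice hρ.continuous t))).mul
        (contSlice (continuous_pD hρ _) t) |>.mul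
        (contSlice (H := fun y τ => (u y τ).1) hu1.continuous t)).add
      ((cmax.pow 2).mul (contSlice (continuous_pD (H := fun y τ => (u y τ).1) hu1 _) t))
  have contG₂ : Continuous G₂ := by
    rw [hG₂]
    exact (((continuous_const.mul cmax).mul
        (continuous_const.mul (contSlice hρ.continuous t))).mul
        (contSlice (continuous_pD hρ _) t) |>.mul
        (contSlice (H := fun y τ => (u y τ).2) hu2.continuous t)).add
      ((cmax.pow 2).mul (contSlice (continuous_pD (H := fun y τ => (u y τ).2) hu2 _) t))
  have hdiv : ∫ x in Q2, (F₁ x + G₂ x) = 0 := by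
    refine div_int_zero
      (fun x => (max ((ρ x t) ^ 2 - M ^ 2) 0) ^ 2 * (u x t).1)
      (fun x => (max ((ρ x t) ^ 2 - M ^ 2) 0) ^ 2 * (u x t).2)
      F₁ G₂ ?_ ?_ contF₁ contG₂ ?_ ?_
    · intro x
      rw [hF₁]
      exact (((gg_hasDerivAt M (ρ (x.1, x.2) t)).comp x.1
          (hasDerivAt_slice1 hρ x t)).mul
        (hasDerivAt_slice1 (H := fun y τ => (u y τ).1) hu1 x t))
    · intro x
      rw [hG₂]
      exact (((gg_hasDerivAt M (ρ (x.1, x.2) t)).comp x.2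
          (hasDerivAt_slice2 hρ x t)).mul
        (hasDerivAt_slice2 (H := fun y τ => (u y τ).2) hu2 x t))
    · intro y
      have eu1 : (u ((π:ℝ), y) t).1 = (u ((-π:ℝ), y) t).1 :=
        per2_fst_end (f := fun x => (u x t).1) (hs.per_u1 t ht) y
      have eρ : ρ ((π:ℝ), y) t = ρ ((-π:ℝ), y) t :=
        per2_fst_end (f := fun x => ρ x t) (hs.per_rho t ht) y
      show (max ((ρ ((π:ℝ), y) t) ^ 2 - M ^ 2) 0) ^ 2 * (u ((π:ℝ), y) t).1
          = (max ((ρ ((-π:ℝ), y) t) ^ 2 - M ^ 2) 0) ^ 2 * (u ((-π:ℝ), y) t).1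
      rw [eu1, eρ]
    · intro a
      have eu2 : (u (a, (π:ℝ)) t).2 = (u (a, (-π:ℝ)) t).2 :=
        per2_snd_end (f := fun x => (u x t).2) (hs.per_u2 t ht) a
      have eρ : ρ (a, (π:ℝ)) t = ρ (a, (-π:ℝ)) t :=
        per2_snd_end (f := fun x => ρ x t) (hs.per_rho t ht) a
      show (max ((ρ (a, (π:ℝ)) t) ^ 2 - M ^ 2) 0) ^ 2 * (u (a, (π:ℝ)) t).2
          = (max ((ρ (a, (-π:ℝ)) t) ^ 2 - M ^ 2) 0) ^ 2 * (u (a, (-π:ℝ)) t).2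
      rw [eu2, eρ]
  have hpt : ∀ x : Pt, (2 * max ((ρ x t) ^ 2 - M ^ 2) 0 * (2 * ρ x t)) * pD ρ ((0,0),1) x t
      = 0 - (F₁ x + G₂ x) := by
    intro x
    have h1 := transport' hs x t ht
    have h2 := incomp' hs x t ht
    rw [hF₁, hG₂]
    linear_combination (2 * max ((ρ x t) ^ 2 - M ^ 2) 0 * (2 * ρ x t)) * h1
      + (max ((ρ x t) ^ 2 - M ^ 2) 0) ^ 2 * h2
  calc ∫ x in Q2, (2 * max ((ρ x t) ^ 2 - M ^ 2) 0 * (2 * ρ x t)) * pD ρ ((0,0),1) x t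
      = ∫ x in Q2, (0 - (F₁ x + G₂ x)) :=
        setIntegral_congr_fun measurableSet_Q2 (fun x _ => hpt x)
    _ = 0 := by
        simp only [zero_sub]
        rw [integral_neg, hdiv, neg_zero]

end conserve
end IPMaux2

open IPMaux IPMaux2

/-- On the torus, along any global smooth solution of IPM with odd-in-`x₂`
density, `E(t) = ∫_{[-π,π]²} x₂ ρ(x,t) dx` satisfies `E'(t) = -∫_{[-π,π]²} |u(x,t)|² dx` for
`t ≥ 0`; in particular `E` is nonincreasing on `[0,∞)` and
`∫₀^∞ ∫ |u|² dx dt ≤ E(0) + 2π³ sup|ρ₀|`. -/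
theorem ipm_torus_energy
    (ρ₀ : Pt → ℝ) (hρ₀smooth : ContDiff ℝ (⊤ : ℕ∞) ρ₀) (hρ₀per : Per2 ρ₀)
    (hρ₀odd : ∀ x : Pt, ρ₀ (x.1, -x.2) = -ρ₀ x)
    (ρ : Pt → ℝ → ℝ) (u : Pt → ℝ → Pt) (p : Pt → ℝ → ℝ)
    (hsol : IsIPMSolT2 ρ u p)
    (hinit : ∀ x : Pt, ρ x 0 = ρ₀ x)
    (hodd : ∀ x : Pt, ∀ t : ℝ, 0 ≤ t → ρ (x.1, -x.2) t = -ρ x t) :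
    (∀ t : ℝ, 0 ≤ t →
        HasDerivWithinAt (fun τ => ∫ x in Q2, x.2 * ρ x τ)
          (-(∫ x in Q2, ((u x t).1 ^ 2 + (u x t).2 ^ 2))) (Set.Ici 0) t)
    ∧ AntitoneOn (fun τ => ∫ x in Q2, x.2 * ρ x τ) (Set.Ici 0)
    ∧ ∫⁻ t in Set.Ioi (0 : ℝ),
          ENNReal.ofReal (∫ x in Q2, ((u x t).1 ^ 2 + (u x t).2 ^ 2))
        ≤ ENNReal.ofReal ((∫ x in Q2, x.2 * ρ₀ x) + 2 * π ^ 3 * ⨆ x : Pt, |ρ₀ x|) := by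
  have hu1 := smooth_u1 hsol
  have hu2 := smooth_u2 hsol
  have hρ := hsol.smooth_rho
  -- the energy and its derivative
  set E : ℝ → ℝ := fun τ => ∫ x in Q2, x.2 * ρ x τ with hEdef
  have hEderiv : ∀ t : ℝ, 0 ≤ t →
      HasDerivAt E (-(∫ x in Q2, ((u x t).1 ^ 2 + (u x t).2 ^ 2))) t := by
    intro t ht
    have h := energy_hasDerivAt hsol t
    rwa [spatial_identity hsol hodd t ht] at h
  have hEcont : Continuous E :=
    continuous_iff_continuousAt.2 fun t => (energy_hasDerivAt hsol t).continuousAt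
  -- the dissipation and its continuity
  set φ : ℝ → ℝ := fun τ => ∫ x in Q2, ((u x τ).1 ^ 2 + (u x τ).2 ^ 2) with hφdef
  have hφpos : ∀ τ, 0 ≤ φ τ := fun τ => integral_nonneg fun x => by positivity
  have hφderiv : ∀ τ : ℝ, HasDerivAt φ
      (∫ x in Q2, ((2:ℝ) * (u x τ).1 * pD (fun y σ => (u y σ).1) ((0,0),1) x τ
        + (2:ℝ) * (u x τ).2 * pD (fun y σ => (u y σ).2) ((0,0),1) x τ)) τ := by
    intro τ
    refine hasDerivAt_intQ2 (fun x σ => ((u x σ).1 ^ 2 + (u x σ).2 ^ 2))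
      (fun x σ => (2:ℝ) * (u x σ).1 * pD (fun y σ' => (u y σ').1) ((0,0),1) x σ
        + (2:ℝ) * (u x σ).2 * pD (fun y σ' => (u y σ').2) ((0,0),1) x σ)
      ?_ ?_ ?_ τ
    · exact (hu1.continuous.pow 2).add (hu2.continuous.pow 2)
    · exact ((continuous_const.mul hu1.continuous).mul
        (continuous_pD (H := fun y σ' => (u y σ').1) hu1 _)).add
        ((continuous_const.mul hu2.continuous).mul
          (continuous_pD (H := fun y σ' => (u y σ').2) hu2 _))
    · intro x σ
      have h := ((hasDerivAt_sliceT (H := fun y σ' => (u y σ').1) hu1 x σ).pow 2).add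
        ((hasDerivAt_sliceT (H := fun y σ' => (u y σ').2) hu2 x σ).pow 2)
      refine h.congr_deriv ?_
      push_cast
      ring
  have hφcont : Continuous φ :=
    continuous_iff_continuousAt.2 fun τ => (hφderiv τ).continuousAt
  -- the sup bound
  set M₀ : ℝ := ⨆ x : Pt, |ρ₀ x| with hM₀def
  have hbdd : BddAbove (Set.range fun x => |ρ₀ x|) :=
    per2_bddAbove_abs hρ₀per hρ₀smooth.continuous
  have hM₀ : ∀ x : Pt, |ρ₀ x| ≤ M₀ := fun x => le_ciSup hbdd x
  have hM₀0 : 0 ≤ M₀ := le_trans (abs_nonneg _) (hM₀ (0, 0))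
  -- conservation of the excess functional
  set Ψ : ℝ → ℝ := fun τ => ∫ x in Q2, (max ((ρ x τ) ^ 2 - M₀ ^ 2) 0) ^ 2 with hΨdef
  have hΨzero : ∀ T : ℝ, 0 ≤ T → Ψ T = 0 := by
    intro T hT
    have hΨ0 : Ψ 0 = 0 := by
      rw [hΨdef]
      have : ∀ x : Pt, (max ((ρ x 0) ^ 2 - M₀ ^ 2) 0) ^ 2 = 0 := by
        intro x
        have h1 : (ρ x 0) ^ 2 - M₀ ^ 2 ≤ 0 := by
          rw [hinit x]
          nlinarith [hM₀ x, abs_nonneg (ρ₀ x), sq_abs (ρ₀ x)]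
        rw [max_eq_right h1]
        norm_num
      simp only [this, integral_zero]
    have hconst : Ψ T = Ψ 0 := by
      rcases eq_or_lt_of_le hT with h | h
      · rw [← h]
      · have := constant_of_has_deriv_right_zero (f := Ψ) (a := 0) (b := T)
          (continuous_iff_continuousAt.2 fun τ =>
            (psi_hasDerivAt hsol M₀ τ).continuousAt).continuousOn
          (fun τ hτ => by
            have h0 := psi_hasDerivAt hsol M₀ τ
            rw [psi_deriv_zero hsol M₀ τ hτ.1] at h0
            exact h0.hasDerivWithinAt)
        exact this T ⟨hT, le_rfl⟩
    rw [hconst, hΨ0]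
  -- pointwise a.e. bound on the density
  have hEbound : ∀ T : ℝ, 0 ≤ T → -(2 * π ^ 3 * M₀) ≤ E T := by
    intro T hT
    have hnn : 0 ≤ᵐ[volume.restrict Q2] fun x : Pt => (max ((ρ x T) ^ 2 - M₀ ^ 2) 0) ^ 2 :=
      Eventually.of_forall fun x => by positivity
    have hint : Integrable (fun x : Pt => (max ((ρ x T) ^ 2 - M₀ ^ 2) 0) ^ 2)
        (volume.restrict Q2) :=
      integrableOn_Q2 (((((contSlice hρ.continuous T).pow 2).sub
        continuous_const).max continuous_const).pow 2)
    have hae : (fun x : Pt => (max ((ρ x T) ^ 2 - M₀ ^ 2) 0) ^ 2)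
        =ᵐ[volume.restrict Q2] 0 :=
      (integral_eq_zero_iff_of_nonneg_ae hnn hint).1 (hΨzero T hT)
    have haeρ : ∀ᵐ x ∂(volume.restrict Q2), |x.2 * ρ x T| ≤ M₀ * |x.2| := by
      filter_upwards [hae] with x hx
      have h1 : max ((ρ x T) ^ 2 - M₀ ^ 2) 0 = 0 := by
        have := sq_eq_zero_iff.1 hx
        exact this
      have h2 : (ρ x T) ^ 2 ≤ M₀ ^ 2 := by
        rcases max_eq_iff.1 h1 with ⟨h, _⟩ | ⟨_, h⟩
        · linarith
        · linarith
      have h3 : |ρ x T| ≤ M₀ := by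
        nlinarith [sq_abs (ρ x T), abs_nonneg (ρ x T), hM₀0, h2]
      rw [abs_mul]
      calc |x.2| * |ρ x T| ≤ |x.2| * M₀ := by
            exact mul_le_mul_of_nonneg_left h3 (abs_nonneg _)
        _ = M₀ * |x.2| := by ring
    have hintL : Integrable (fun x : Pt => |x.2 * ρ x T|) (volume.restrict Q2) :=
      integrableOn_Q2 ((continuous_snd.mul (contSlice hρ.continuous T)).abs)
    have hintR : Integrable (fun x : Pt => M₀ * |x.2|) (volume.restrict Q2) :=
      integrableOn_Q2 (continuous_const.mul continuous_snd.abs)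
    have habs : |E T| ≤ M₀ * (2 * π ^ 3) := by
      calc |E T| ≤ ∫ x in Q2, |x.2 * ρ x T| := by
            simpa only [Real.norm_eq_abs] using
              norm_integral_le_integral_norm (μ := volume.restrict Q2)
                (fun x : Pt => x.2 * ρ x T)
        _ ≤ ∫ x in Q2, M₀ * |x.2| := integral_mono_ae hintL hintR haeρ
        _ = M₀ * ∫ x in Q2, |x.2| := integral_const_mul M₀ _
        _ = M₀ * (2 * π ^ 3) := by rw [integral_abs_snd_Q2]
    have := neg_abs_le (E T)
    nlinarith [habs, this]
  -- part 1
  have part1 : ∀ t : ℝ, 0 ≤ t →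
      HasDerivWithinAt E (-(∫ x in Q2, ((u x t).1 ^ 2 + (u x t).2 ^ 2))) (Set.Ici 0) t :=
    fun t ht => (hEderiv t ht).hasDerivWithinAt
  -- part 2
  have part2 : AntitoneOn E (Set.Ici 0) := by
    refine antitoneOn_of_deriv_nonpos (convex_Ici 0) hEcont.continuousOn
      (fun t _ => (energy_hasDerivAt hsol t).differentiableAt.differentiableWithinAt) ?_
    intro t ht
    rw [interior_Ici] at ht
    rw [(hEderiv t (le_of_lt ht)).deriv]
    exact neg_nonpos.2 (hφpos t)
  refine ⟨part1, part2, ?_⟩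
  -- part 3
  have hE0 : E 0 = ∫ x in Q2, x.2 * ρ₀ x := by
    rw [hEdef]
    exact setIntegral_congr_fun measurableSet_Q2 fun x _ => by rw [hinit x]
  refine lintegral_Ioi_le_of_forall φ hφcont hφpos _ ?_
  intro n
  have hn0 : (0:ℝ) ≤ (n:ℝ) := Nat.cast_nonneg n
  have hftc : ∫ t in (0:ℝ)..(n:ℝ), -(φ t) = E n - E 0 := by
    refine intervalIntegral.integral_eq_sub_of_hasDerivAt ?_
      ((hφcont.neg).intervalIntegrable _ _)
    intro τ hτ
    rw [Set.uIcc_of_le hn0] at hτ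
    exact hEderiv τ hτ.1
  have h2 : ∫ t in Set.Ioc (0:ℝ) (n:ℝ), φ t = E 0 - E n := by
    rw [← intervalIntegral.integral_of_le hn0]
    have := hftc
    rw [intervalIntegral.integral_neg] at this
    linarith
  rw [h2, hE0.symm]
  have := hEbound n hn0
  linarith [hEbound (n:ℝ) hn0]
end
end

section
/- Let C₁, C₂ > 0 and let g : ℝ² → ℂ be measurable with ∫_{ℝ²} |g(ξ)|² dξ = C₂ and |g(ξ)| ≤ C₁ for almost every ξ. Suppose δ := ∫_{ℝ²} (ξ₁²/|ξ|²) |g(ξ)|² dξ satisfies 0 < δ ≤ C₂/4. Then for every s > 0, ∫_{ℝ²} |ξ|^{2s} |g(ξ)|² dξ ≥ (C₂/4) · ((4C₁)^{−1} C₂^{3/4} δ^{−1/4})^{2s}. -/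
open Real MeasureTheory Filter Topology
open scoped ENNReal NNReal

noncomputable section

set_option maxHeartbeats 1000000 in
/-- The key Fourier-side estimate: if `g ∈ L²(ℝ²)` has total mass
`∫ |g|² = C₂`, is bounded by `C₁`, and its mass concentrates near the vertical axis in the sense
that `δ = ∫ (ξ₁²/|ξ|²) |g(ξ)|² dξ` satisfies `0 < δ ≤ C₂/4`, then for every `s > 0`,
`∫ |ξ|^{2s} |g(ξ)|² dξ ≥ (C₂/4) ((4C₁)⁻¹ C₂^{3/4} δ^{-1/4})^{2s}`. -/
theorem fourier_concentration_estimate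
    (C₁ C₂ : ℝ) (hC₁ : 0 < C₁) (hC₂ : 0 < C₂)
    (g : Pt → ℂ) (hmeas : Measurable g)
    (hint : Integrable fun ξ : Pt => ‖g ξ‖ ^ 2)
    (hL2 : ∫ ξ : Pt, ‖g ξ‖ ^ 2 = C₂)
    (hbd : ∀ᵐ ξ : Pt, ‖g ξ‖ ≤ C₁)
    (δ : ℝ) (hδdef : δ = ∫ ξ : Pt, ξ.1 ^ 2 / (ξ.1 ^ 2 + ξ.2 ^ 2) * ‖g ξ‖ ^ 2)
    (hδpos : 0 < δ) (hδsmall : δ ≤ C₂ / 4)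
    (s : ℝ) (hs : 0 < s) :
    ENNReal.ofReal (C₂ / 4 * ((4 * C₁)⁻¹ * C₂ ^ (3/4 : ℝ) * δ ^ (-(1/4) : ℝ)) ^ (2 * s))
      ≤ ∫⁻ ξ : Pt, ENNReal.ofReal ((ξ.1 ^ 2 + ξ.2 ^ 2) ^ s * ‖g ξ‖ ^ 2) := by
  have hfmeas : Measurable fun ξ : Pt => ‖g ξ‖ ^ 2 := (hmeas.norm).pow_const 2
  have hf0 : ∀ ξ : Pt, (0:ℝ) ≤ ‖g ξ‖ ^ 2 := fun ξ => sq_nonneg _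
  set ρ : ℝ := (4 * C₁)⁻¹ * C₂ ^ (3/4 : ℝ) * δ ^ (-(1/4) : ℝ) with hρdef
  have hρpos : 0 < ρ := by
    have h1 : (0:ℝ) < C₂ ^ (3/4 : ℝ) := Real.rpow_pos_of_pos hC₂ _
    have h2 : (0:ℝ) < δ ^ (-(1/4) : ℝ) := Real.rpow_pos_of_pos hδpos _
    positivity
  set θ : ℝ := 2 * Real.sqrt (δ / C₂) with hθdef
  have hθpos : 0 < θ := by
    have := Real.sqrt_pos.2 (div_pos hδpos hC₂)
    positivity
  have hθsq : θ ^ 2 = 4 * (δ / C₂) := by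
    rw [hθdef, mul_pow, Real.sq_sqrt (le_of_lt (div_pos hδpos hC₂))]; ring
  have hδθ : δ / θ ^ 2 = C₂ / 4 := by
    rw [hθsq]; field_simp
  -- key algebraic identity
  have hsa : (0:ℝ) < Real.sqrt δ := Real.sqrt_pos.2 hδpos
  have hsb : (0:ℝ) < Real.sqrt C₂ := Real.sqrt_pos.2 hC₂
  have h1 : (C₂ ^ (3/4 : ℝ)) ^ 2 = C₂ * Real.sqrt C₂ := by
    rw [← Real.rpow_natCast (C₂ ^ (3/4 : ℝ)) 2, ← Real.rpow_mul hC₂.le,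
      Real.sqrt_eq_rpow]
    rw [show ((3:ℝ)/4 * (2:ℕ) : ℝ) = 1 + 1/2 by push_cast; norm_num]
    rw [Real.rpow_add hC₂, Real.rpow_one]
  have h2 : (δ ^ (-(1/4) : ℝ)) ^ 2 = (Real.sqrt δ)⁻¹ := by
    rw [← Real.rpow_natCast (δ ^ (-(1/4) : ℝ)) 2, ← Real.rpow_mul hδpos.le,
      Real.sqrt_eq_rpow]
    rw [show (-(1/4:ℝ) * (2:ℕ) : ℝ) = -(1/2) by push_cast; norm_num]
    rw [Real.rpow_neg hδpos.le]
  have hkey : C₁ ^ 2 * (4 * θ * ρ ^ 2) = C₂ / 2 := by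
    have hb2 : Real.sqrt C₂ ^ 2 = C₂ := Real.sq_sqrt hC₂.le
    rw [hθdef, hρdef, Real.sqrt_div hδpos.le, mul_pow, mul_pow, h1, h2]
    field_simp
    nlinarith [hb2, hsa, hsb, sq_nonneg (Real.sqrt C₂), mul_pos hsa hsb]
  -- the sets
  set A : Set Pt := {ξ : Pt | ρ ^ 2 ≤ ξ.1 ^ 2 + ξ.2 ^ 2} with hAdef
  have hAmeas : MeasurableSet A := by
    apply measurableSet_le measurable_const
    exact ((measurable_fst.pow_const 2).add (measurable_snd.pow_const 2))
  set S : Set Pt := {ξ : Pt | ξ.1 ^ 2 ≤ θ ^ 2 * (ξ.1 ^ 2 + ξ.2 ^ 2)} with hSdef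
  have hSmeas : MeasurableSet S := by
    apply measurableSet_le (measurable_fst.pow_const 2)
    exact (measurable_const.mul ((measurable_fst.pow_const 2).add (measurable_snd.pow_const 2)))
  -- weight function
  have hwmeas : Measurable fun ξ : Pt => ξ.1 ^ 2 / (ξ.1 ^ 2 + ξ.2 ^ 2) :=
    (measurable_fst.pow_const 2).div ((measurable_fst.pow_const 2).add (measurable_snd.pow_const 2))
  have hw0 : ∀ ξ : Pt, 0 ≤ ξ.1 ^ 2 / (ξ.1 ^ 2 + ξ.2 ^ 2) := fun ξ =>
    div_nonneg (sq_nonneg _) (by positivity)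
  have hw1 : ∀ ξ : Pt, ξ.1 ^ 2 / (ξ.1 ^ 2 + ξ.2 ^ 2) ≤ 1 := by
    intro ξ
    rcases eq_or_lt_of_le (show (0:ℝ) ≤ ξ.1 ^ 2 + ξ.2 ^ 2 by positivity) with h | h
    · rw [← h, div_zero]; norm_num
    · rw [div_le_one h]; nlinarith [sq_nonneg ξ.2]
  have hwf_int : Integrable fun ξ : Pt => ξ.1 ^ 2 / (ξ.1 ^ 2 + ξ.2 ^ 2) * ‖g ξ‖ ^ 2 := by
    apply Integrable.mono hint ((hwmeas.mul hfmeas).aestronglyMeasurable)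
    filter_upwards with ξ
    rw [Real.norm_eq_abs, Real.norm_eq_abs]
    show |ξ.1 ^ 2 / (ξ.1 ^ 2 + ξ.2 ^ 2) * ‖g ξ‖ ^ 2| ≤ |‖g ξ‖ ^ 2|
    rw [abs_mul]
    have := hw0 ξ; have := hw1 ξ
    have hfa : |‖g ξ‖ ^ 2| = ‖g ξ‖ ^ 2 := abs_of_nonneg (hf0 ξ)
    rw [hfa, abs_of_nonneg (hw0 ξ)]
    nlinarith [hf0 ξ]
  -- bound on Sᶜ
  have hScompl : ∫ ξ in Sᶜ, ‖g ξ‖ ^ 2 ≤ C₂ / 4 := by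
    have hmono : ∫ ξ in Sᶜ, θ ^ 2 * ‖g ξ‖ ^ 2
        ≤ ∫ ξ in Sᶜ, ξ.1 ^ 2 / (ξ.1 ^ 2 + ξ.2 ^ 2) * ‖g ξ‖ ^ 2 := by
      apply setIntegral_mono_on (hint.const_mul _).integrableOn hwf_int.integrableOn hSmeas.compl
      intro ξ hξ
      have hξ' : ¬ (ξ.1 ^ 2 ≤ θ ^ 2 * (ξ.1 ^ 2 + ξ.2 ^ 2)) := hξ
      have hgt : θ ^ 2 * (ξ.1 ^ 2 + ξ.2 ^ 2) < ξ.1 ^ 2 := not_le.mp hξ'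
      have hsum : 0 < ξ.1 ^ 2 + ξ.2 ^ 2 := by
        rcases eq_or_lt_of_le (show (0:ℝ) ≤ ξ.1 ^ 2 + ξ.2 ^ 2 by positivity) with h | h
        · exfalso; apply hξ'; rw [← h, mul_zero]; nlinarith [sq_nonneg ξ.2]
        · exact h
      have : θ ^ 2 ≤ ξ.1 ^ 2 / (ξ.1 ^ 2 + ξ.2 ^ 2) := by
        rw [le_div_iff₀ hsum]; exact hgt.le
      exact mul_le_mul_of_nonneg_right this (hf0 ξ)
    have h2 : ∫ ξ in Sᶜ, ξ.1 ^ 2 / (ξ.1 ^ 2 + ξ.2 ^ 2) * ‖g ξ‖ ^ 2 ≤ δ := by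
      rw [hδdef]
      exact setIntegral_le_integral hwf_int
        (Filter.Eventually.of_forall fun ξ => mul_nonneg (hw0 ξ) (hf0 ξ))
    have h3 : θ ^ 2 * ∫ ξ in Sᶜ, ‖g ξ‖ ^ 2 ≤ δ := by
      rw [← MeasureTheory.integral_const_mul]
      exact hmono.trans h2
    rw [← hδθ, le_div_iff₀ (by positivity : (0:ℝ) < θ ^ 2)]
    linarith
  -- bound on Aᶜ ∩ S
  have hrect : (Aᶜ ∩ S) ⊆ Set.Icc (-(θ * ρ)) (θ * ρ) ×ˢ Set.Icc (-ρ) ρ := by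
    rintro ⟨x, y⟩ ⟨hA', hS'⟩
    have hsum : x ^ 2 + y ^ 2 < ρ ^ 2 := not_le.mp hA'
    have hx2 : x ^ 2 ≤ θ ^ 2 * (x ^ 2 + y ^ 2) := hS'
    have hxb : x ^ 2 ≤ (θ * ρ) ^ 2 := by nlinarith [sq_nonneg θ]
    have hyb : y ^ 2 ≤ ρ ^ 2 := by nlinarith [sq_nonneg x]
    have hθρ : 0 < θ * ρ := mul_pos hθpos hρpos
    constructor
    · constructor <;> nlinarith
    · constructor <;> nlinarith
  have hmeasB : volume (Aᶜ ∩ S) ≤ ENNReal.ofReal (4 * θ * ρ ^ 2) := by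
    calc volume (Aᶜ ∩ S) ≤ volume (Set.Icc (-(θ * ρ)) (θ * ρ) ×ˢ Set.Icc (-ρ) ρ) :=
          measure_mono hrect
    _ = ENNReal.ofReal (4 * θ * ρ ^ 2) := by
        rw [MeasureTheory.Measure.volume_eq_prod ℝ ℝ,
          MeasureTheory.Measure.prod_prod, Real.volume_Icc, Real.volume_Icc,
          show θ * ρ - -(θ * ρ) = 2 * (θ * ρ) by ring, show ρ - -ρ = 2 * ρ by ring,
          ← ENNReal.ofReal_mul (by positivity)]
        congr 1; ring
  have hfinB : volume (Aᶜ ∩ S) < ⊤ := hmeasB.trans_lt ENNReal.ofReal_lt_top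
  have hB : ∫ ξ in Aᶜ ∩ S, ‖g ξ‖ ^ 2 ≤ C₂ / 2 := by
    have hb1 : ∫ ξ in Aᶜ ∩ S, ‖g ξ‖ ^ 2 ≤ ∫ _ξ in Aᶜ ∩ S, (C₁ ^ 2 : ℝ) := by
      apply integral_mono_ae hint.integrableOn (integrableOn_const hfinB.ne)
      exact ae_restrict_of_ae (hbd.mono fun ξ h => pow_le_pow_left₀ (norm_nonneg _) h 2)
    have hb2 : ∫ _ξ in Aᶜ ∩ S, (C₁ ^ 2 : ℝ) = C₁ ^ 2 * (volume (Aᶜ ∩ S)).toReal := by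
      rw [setIntegral_const, smul_eq_mul, mul_comm]; rfl
    have hb3 : (volume (Aᶜ ∩ S)).toReal ≤ 4 * θ * ρ ^ 2 := by
      have := ENNReal.toReal_mono ENNReal.ofReal_ne_top hmeasB
      rwa [ENNReal.toReal_ofReal (by positivity)] at this
    calc ∫ ξ in Aᶜ ∩ S, ‖g ξ‖ ^ 2 ≤ C₁ ^ 2 * (volume (Aᶜ ∩ S)).toReal := hb1.trans_eq hb2
    _ ≤ C₁ ^ 2 * (4 * θ * ρ ^ 2) := mul_le_mul_of_nonneg_left hb3 (sq_nonneg _)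
    _ = C₂ / 2 := hkey
  -- splitting
  have hsplit : ∫ ξ in Aᶜ, ‖g ξ‖ ^ 2
      = (∫ ξ in Aᶜ ∩ S, ‖g ξ‖ ^ 2) + ∫ ξ in Aᶜ ∩ Sᶜ, ‖g ξ‖ ^ 2 := by
    have hdisj : Disjoint (Aᶜ ∩ S) (Aᶜ ∩ Sᶜ) :=
      (disjoint_compl_right (a := S)).mono Set.inter_subset_right Set.inter_subset_right
    have := setIntegral_union (f := fun ξ : Pt => ‖g ξ‖ ^ 2) (μ := volume) hdisj
      (hAmeas.compl.inter hSmeas.compl) hint.integrableOn hint.integrableOn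
    rw [Set.inter_union_compl] at this
    exact this
  have hAcSc : ∫ ξ in Aᶜ ∩ Sᶜ, ‖g ξ‖ ^ 2 ≤ ∫ ξ in Sᶜ, ‖g ξ‖ ^ 2 :=
    setIntegral_mono_set hint.integrableOn
      (Filter.Eventually.of_forall fun ξ => hf0 ξ)
      (HasSubset.Subset.eventuallyLE Set.inter_subset_right)
  have htotal : (∫ ξ in A, ‖g ξ‖ ^ 2) + ∫ ξ in Aᶜ, ‖g ξ‖ ^ 2 = C₂ := by
    rw [← hL2]
    exact integral_add_compl hAmeas hint
  have hM : C₂ / 4 ≤ ∫ ξ in A, ‖g ξ‖ ^ 2 := by linarith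
  -- final estimate
  have hρ2s : ρ ^ (2 * s) = (ρ ^ 2) ^ s := by
    rw [← Real.rpow_natCast ρ 2, ← Real.rpow_mul hρpos.le]
    norm_num
  have hρ2s_pos : 0 < ρ ^ (2 * s) := Real.rpow_pos_of_pos hρpos _
  calc ENNReal.ofReal (C₂ / 4 * ρ ^ (2 * s))
      ≤ ENNReal.ofReal (ρ ^ (2 * s) * ∫ ξ in A, ‖g ξ‖ ^ 2) := by
        apply ENNReal.ofReal_le_ofReal
        rw [mul_comm (C₂ / 4)]
        exact mul_le_mul_of_nonneg_left hM hρ2s_pos.le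
    _ = ENNReal.ofReal (ρ ^ (2 * s)) * ENNReal.ofReal (∫ ξ in A, ‖g ξ‖ ^ 2) :=
        ENNReal.ofReal_mul hρ2s_pos.le
    _ = ENNReal.ofReal (ρ ^ (2 * s)) * ∫⁻ ξ in A, ENNReal.ofReal (‖g ξ‖ ^ 2) := by
        rw [ofReal_integral_eq_lintegral_ofReal hint.integrableOn
          (ae_restrict_of_ae (Filter.Eventually.of_forall fun ξ => hf0 ξ))]
    _ = ∫⁻ ξ in A, ENNReal.ofReal (ρ ^ (2 * s)) * ENNReal.ofReal (‖g ξ‖ ^ 2) :=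
        (lintegral_const_mul _ (ENNReal.measurable_ofReal.comp hfmeas)).symm
    _ = ∫⁻ ξ in A, ENNReal.ofReal (ρ ^ (2 * s) * ‖g ξ‖ ^ 2) := by
        congr 1; funext ξ; rw [← ENNReal.ofReal_mul hρ2s_pos.le]
    _ ≤ ∫⁻ ξ in A, ENNReal.ofReal ((ξ.1 ^ 2 + ξ.2 ^ 2) ^ s * ‖g ξ‖ ^ 2) := by
        apply setLIntegral_mono' hAmeas
        intro ξ hξ
        apply ENNReal.ofReal_le_ofReal
        apply mul_le_mul_of_nonneg_right _ (hf0 ξ)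
        rw [hρ2s]
        exact Real.rpow_le_rpow (by positivity) hξ hs.le
    _ ≤ ∫⁻ ξ : Pt, ENNReal.ofReal ((ξ.1 ^ 2 + ξ.2 ^ 2) ^ s * ‖g ξ‖ ^ 2) :=
        setLIntegral_le_lintegral _ _
end
end
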